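/- Let q be an odd prime power with q ≡ 3 (mod 4) and q > 3, set d = (q-3)/2, and suppose 5 is a nonzero square in F_q. Then the equation (x+1)^d - x^d = 1 has exactly three solutions x ∈ F_q. -/

import Mathlib

theorem stmt_9 (F : Type*) [Field F] [Fintype F] [DecidableEq F]
    (hq3 : Fintype.card F % 4 = 3) (hq : 3 < Fintype.card F)
    (h5 : (5 : F) ≠ 0) (h5sq : IsSquare (5 : F))
    (d : ℕ) (hd : d = (Fintype.card F - 3) / 2) :
    {x : F | (x + 1) ^ d - x ^ d = 1}.ncard = 3 := by
  classical
  set q := Fintype.card F with hqdef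
  have hq7 : 7 ≤ q := by omega
  have hd0 : 0 < d := by omega
  set n := d + 1 with hn
  have h2n : 2 * n = q - 1 := by omega
  have hoddn : Odd n := by rw [Nat.odd_iff]; omega
  have hEd : Even d := by rw [Nat.even_iff]; omega
  have h2 : (2 : F) ≠ 0 := by
    apply Ring.two_ne_zero
    intro hc
    have := FiniteField.even_card_iff_char_two.mp hc
    omega
  have pow1 : ∀ y : F, y ≠ 0 → y ^ (q - 1) = 1 := fun y hy =>
    FiniteField.pow_card_sub_one_eq_one y hy
  have sq1 : ∀ y : F, y ≠ 0 → y ^ n = 1 ∨ y ^ n = -1 := by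
    intro y hy
    have h' : y ^ n * y ^ n = 1 := by
      rw [← pow_add, show n + n = q - 1 by omega]
      exact pow1 y hy
    exact mul_self_eq_one_iff.mp h'
  have hneg1 : (-1 : F) ^ n = -1 := hoddn.neg_one_pow
  -- main claim for any golden-ratio root ψ with ψ^n = -1
  suffices hmain : ∀ ψ : F, ψ ^ 2 = ψ + 1 → ψ ^ n = -1 →
      {x : F | (x + 1) ^ d - x ^ d = 1}.ncard = 3 by
    obtain ⟨s, hs⟩ := h5sq
    set φ : F := (1 + s) / 2 with hφ
    have hφsq : φ ^ 2 = φ + 1 := by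
      rw [hφ]
      field_simp
      linear_combination (-1 : F) * hs
    have hφ0 : φ ≠ 0 := by
      intro h
      rw [h] at hφsq
      simp at hφsq
    have h1φsq : (1 - φ) ^ 2 = (1 - φ) + 1 := by linear_combination hφsq
    have hprod : φ * (1 - φ) = -1 := by linear_combination -hφsq
    have h1φ0 : (1 - φ) ≠ 0 := by
      intro h
      rw [h, mul_zero] at hprod
      exact absurd hprod (by norm_num)
    have hm : φ ^ n * (1 - φ) ^ n = -1 := by
      rw [← mul_pow, hprod, hneg1]
    rcases sq1 φ hφ0 with h1 | h1
    · refine hmain (1 - φ) h1φsq ?_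
      rw [h1, one_mul] at hm
      exact hm
    · exact hmain φ hφsq h1
  intro ψ hψ hψn
  have hψ0 : ψ ≠ 0 := by
    intro h
    rw [h] at hψ
    simp at hψ
  have hprod : ψ * (1 - ψ) = -1 := by linear_combination -hψ
  have h1ψ0 : (1 - ψ) ≠ 0 := by
    intro h
    rw [h, mul_zero] at hprod
    exact absurd hprod (by norm_num)
  have hm : ψ ^ n * (1 - ψ) ^ n = -1 := by rw [← mul_pow, hprod, hneg1]
  have h1ψn : (1 - ψ) ^ n = 1 := by
    rw [hψn] at hm
    linear_combination -hm
  have hψinv : ψ * (ψ - 1) = 1 := by linear_combination hψ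
  have hseteq : {x : F | (x + 1) ^ d - x ^ d = 1} = {0, ψ, ψ⁻¹} := by
    ext x
    simp only [Set.mem_setOf_eq, Set.mem_insert_iff, Set.mem_singleton_iff]
    constructor
    · intro hsol
      by_cases hx0 : x = 0
      · exact Or.inl hx0
      by_cases hx1 : x = -1
      · exfalso
        rw [hx1] at hsol
        rw [show (-1 : F) + 1 = 0 by ring, zero_pow hd0.ne', hEd.neg_one_pow] at hsol
        exact h2 (by linear_combination -hsol)
      have hx1' : x + 1 ≠ 0 := fun h => hx1 (by linear_combination h)
      have key : x * (x + 1) ^ n - (x + 1) * x ^ n = x * (x + 1) := by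
        rw [hn, pow_succ, pow_succ]
        linear_combination (x * (x + 1)) * hsol
      rcases sq1 x hx0 with ha | ha <;> rcases sq1 (x + 1) hx1' with hb | hb <;>
        rw [ha, hb] at key
      · -- a = 1, b = 1 : x^2 + x + 1 = 0, contradiction
        exfalso
        have hx2 : x ^ 2 + x + 1 = 0 := by linear_combination -key
        have hxn : (x + 1) ^ n = -1 := by
          rw [show (x + 1 : F) = -1 * x ^ 2 by linear_combination hx2, mul_pow, hneg1,
            ← pow_mul, show 2 * n = q - 1 from h2n, pow1 x hx0]
          ring
        rw [hxn] at hb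
        exact h2 (by linear_combination -hb)
      · -- a = 1, b = -1 : x^2 + 3x + 1 = 0, contradiction
        exfalso
        have hx2 : x ^ 2 + 3 * x + 1 = 0 := by linear_combination -key
        have hfac : (x + ψ ^ 2) * (x + (1 - ψ) ^ 2) = 0 := by
          linear_combination hx2 + (2 * x + ψ ^ 2 - ψ + 1) * hψ
        have contra : ∀ t : F, t ≠ 0 → x = -1 * t ^ 2 → False := by
          intro t ht hxt
          have : x ^ n = -1 := by
            rw [hxt, mul_pow, hneg1, ← pow_mul, show 2 * n = q - 1 from h2n, pow1 t ht]
            ring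
          rw [this] at ha
          exact h2 (by linear_combination -ha)
        rcases mul_eq_zero.mp hfac with h | h
        · exact contra ψ hψ0 (by linear_combination h)
        · exact contra (1 - ψ) h1ψ0 (by linear_combination h)
      · -- a = -1, b = 1 : x^2 - x - 1 = 0, so x = ψ
        have hx2 : x ^ 2 - x - 1 = 0 := by linear_combination -key
        have hfac : (x - ψ) * (x - (1 - ψ)) = 0 := by
          linear_combination hx2 - hψ
        rcases mul_eq_zero.mp hfac with h | h
        · exact Or.inr (Or.inl (by linear_combination h))
        · exfalso
          have hxe : x = 1 - ψ := by linear_combination h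
          rw [hxe, h1ψn] at ha
          exact h2 (by linear_combination ha)
      · -- a = -1, b = -1 : x^2 + x - 1 = 0, so x = ψ⁻¹
        have hx2 : x ^ 2 + x - 1 = 0 := by linear_combination -key
        have hfac : (ψ * x - 1) * ((1 - ψ) * x - 1) = 0 := by
          linear_combination -hx2 - x ^ 2 * hψ
        rcases mul_eq_zero.mp hfac with h | h
        · refine Or.inr (Or.inr ?_)
          have : ψ * x = 1 := by linear_combination h
          field_simp
          linear_combination this
        · exfalso
          have h' : (1 - ψ) * x = 1 := by linear_combination h
          have : x ^ n = 1 := by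
            have := congrArg (· ^ n) h'
            simp only [mul_pow, one_pow] at this
            rw [h1ψn, one_mul] at this
            exact this
          rw [this] at ha
          exact h2 (by linear_combination ha)
    · intro hx
      rcases hx with h | h | h
      · rw [h]
        simp [zero_pow hd0.ne']
      · rw [h]
        have hψ2 : (ψ : F) ^ 2 ≠ 0 := pow_ne_zero 2 hψ0
        apply mul_left_cancel₀ hψ2
        have e1 : ψ ^ 2 * (ψ + 1) ^ d = 1 := by
          rw [show (ψ + 1 : F) = ψ ^ 2 from hψ.symm, ← pow_succ']
          rw [show (ψ ^ 2) ^ (d + 1) = (ψ ^ n) ^ 2 by rw [← pow_mul, ← pow_mul, hn]; ring_nf]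
          rw [hψn]; ring
        have e2 : ψ ^ 2 * ψ ^ d = -ψ := by
          rw [show ψ ^ 2 * ψ ^ d = ψ * ψ ^ (d + 1) by ring, ← hn, hψn]; ring
        calc ψ ^ 2 * ((ψ + 1) ^ d - ψ ^ d)
            = ψ ^ 2 * (ψ + 1) ^ d - ψ ^ 2 * ψ ^ d := by ring
          _ = 1 + ψ := by rw [e1, e2]; ring
          _ = ψ ^ 2 * 1 := by linear_combination -hψ
      · rw [h, show (ψ⁻¹ : F) = ψ - 1 from by
          field_simp; linear_combination -hψ]
        have hψ1 : (ψ - 1 : F) ≠ 0 := by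
          intro hc
          apply h1ψ0
          linear_combination -hc
        have hc : ψ * (ψ - 1) ≠ 0 := mul_ne_zero hψ0 hψ1
        apply mul_left_cancel₀ hc
        have hψ1n : (ψ - 1) ^ n = -1 := by
          have h' : (ψ * (ψ - 1)) ^ n = 1 := by rw [hψinv, one_pow]
          rw [mul_pow, hψn] at h'
          linear_combination -h'
        have e1 : ψ * (ψ - 1) * (ψ - 1 + 1) ^ d = -(ψ - 1) := by
          rw [show (ψ - 1 + 1 : F) = ψ by ring,
            show ψ * (ψ - 1) * ψ ^ d = (ψ - 1) * ψ ^ (d + 1) by ring, ← hn, hψn]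
          ring
        have e2 : ψ * (ψ - 1) * (ψ - 1) ^ d = -ψ := by
          rw [show ψ * (ψ - 1) * (ψ - 1) ^ d = ψ * (ψ - 1) ^ (d + 1) by ring, ← hn, hψ1n]
          ring
        calc ψ * (ψ - 1) * ((ψ - 1 + 1) ^ d - (ψ - 1) ^ d)
            = ψ * (ψ - 1) * (ψ - 1 + 1) ^ d - ψ * (ψ - 1) * (ψ - 1) ^ d := by ring
          _ = -(ψ - 1) - -ψ := by rw [e1, e2]
          _ = ψ * (ψ - 1) * 1 := by linear_combination -hψinv
  rw [hseteq]
  rw [Set.ncard_eq_three]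
  refine ⟨0, ψ, ψ⁻¹, Ne.symm hψ0, Ne.symm (inv_ne_zero hψ0), ?_, rfl⟩
  intro hc
  have : ψ * ψ = 1 := by
    nth_rewrite 2 [hc]
    exact mul_inv_cancel₀ hψ0
  have : ψ = 0 := by
    have h2' : ψ ^ 2 = 1 := by rw [sq]; exact this
    rw [hψ] at h2'
    linear_combination h2'
  exact hψ0 this
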